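/- Let R be an integral domain which is a ℚ-algebra, let a ∈ R, and let f = (C a)·exp ∈ R⟦X⟧ (the series a·e^X). Then for every n ≥ 1: A_n(f) = (n−1)! · (C a)^n · rescale n exp; that is, the n-th autonomous polynomial of a·e^X is (n−1)!·a^n·e^{nX}. -/

import Mathlib

open PowerSeries

/-- The autonomous polynomials of a power series: `A_1(f) = f` and
`A_{n+1}(f) = f·δ(A_n(f))`.  Here `autPolyPS f m` is `A_{m+1}(f)`. -/
noncomputable def autPolyPS {R : Type*} [CommRing R] (f : PowerSeries R) :
    ℕ → PowerSeries R
  | 0 => f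
  | m + 1 => f * derivativeFun (autPolyPS f m)

/-- The flow `Φ_f = X + ∑_{n≥1} A_n(f)·T^n/n!` of `f ∈ R⟦X⟧`, as a power series in the time
variable `T` with coefficients in `R⟦X⟧`. -/
noncomputable def flowPS {R : Type*} [CommRing R] [Algebra ℚ R] (f : PowerSeries R) :
    PowerSeries (PowerSeries R) :=
  PowerSeries.mk fun n => if n = 0 then PowerSeries.X
    else PowerSeries.C (R := R) (algebraMap ℚ R (1 / n.factorial)) * autPolyPS f (n - 1)

private theorem derivativeFun_rescale_exp {R : Type*} [CommRing R] [Algebra ℚ R] (c : R) :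
    derivativeFun (rescale c (exp R)) = PowerSeries.C (R := R) c * rescale c (exp R) := by
  ext n
  rw [show derivativeFun (rescale c (exp R)) = derivative R (rescale c (exp R)) from rfl,
    coeff_derivativeFun, coeff_C_mul, coeff_rescale, coeff_rescale, coeff_exp, coeff_exp]
  have h1 : ((n : R) + 1) = algebraMap ℚ R ((n : ℚ) + 1) := by
    simp [map_add, map_natCast]
  rw [h1, mul_assoc, ← map_mul]
  have h2 : (1 / ((n + 1).factorial : ℚ)) * ((n : ℚ) + 1) = 1 / (n.factorial : ℚ) := by
    rw [Nat.factorial_succ]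
    have hn : ((n : ℚ) + 1) ≠ 0 := by positivity
    have hf : ((n.factorial : ℚ)) ≠ 0 := by exact_mod_cast n.factorial_ne_zero
    push_cast
    field_simp
  rw [h2]
  ring

private theorem derivativeFun_C_mul {R : Type*} [CommRing R] (r : R) (f : PowerSeries R) :
    derivativeFun (PowerSeries.C (R := R) r * f) = PowerSeries.C (R := R) r * derivativeFun f := by
  rw [derivativeFun_mul, (show derivativeFun (PowerSeries.C (R := R) r) = 0 from derivative_C), smul_zero, add_zero, smul_eq_mul]

/-- For an integral domain `R` which is a `ℚ`-algebra and `a ∈ R`, the `n`-th autonomous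
polynomial of `f = a·e^X` is `(n-1)!·a^n·e^{nX}` for every `n ≥ 1`. -/
theorem autPolyPS_exp {R : Type*} [CommRing R] [IsDomain R] [Algebra ℚ R] (a : R) :
    ∀ n : ℕ, 1 ≤ n →
      autPolyPS (PowerSeries.C (R := R) a * exp R) (n - 1) =
        ((n - 1).factorial : PowerSeries R) * PowerSeries.C (R := R) a ^ n *
          rescale (n : R) (exp R) := by
  intro n hn
  induction n with
  | zero => omega
  | succ m ih =>
    rcases Nat.eq_zero_or_pos m with hm | hm
    · subst hm
      simp [autPolyPS, rescale_one]
    · obtain ⟨k, rfl⟩ : ∃ k, m = k + 1 := ⟨m - 1, by omega⟩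
      have ihk := ih (by omega)
      simp only [Nat.add_sub_cancel] at ihk ⊢
      show (PowerSeries.C (R := R) a * exp R) * derivativeFun (autPolyPS _ ((k + 1) - 1)) = _
      rw [Nat.add_sub_cancel, ihk]
      have hc : ((k.factorial : PowerSeries R)) * PowerSeries.C (R := R) a ^ (k + 1) =
          PowerSeries.C (R := R) ((k.factorial : R) * a ^ (k + 1)) := by
        rw [map_mul, map_pow, map_natCast]
      rw [hc, derivativeFun_C_mul, derivativeFun_rescale_exp]
      have key : exp R * rescale (((k : R) + 1)) (exp R) =
          rescale ((k : R) + 1 + 1) (exp R) := by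
        have := exp_mul_exp_eq_exp_add (1 : R) ((k : R) + 1)
        rw [rescale_one] at this
        rw [show (k : R) + 1 + 1 = 1 + ((k : R) + 1) by ring, ← this]
        rfl
      have hcast : (((k + 1 : ℕ) : R)) = (k : R) + 1 := by push_cast; ring
      rw [hcast] at *
      calc (PowerSeries.C (R := R) a * exp R) *
            (PowerSeries.C (R := R) ((k.factorial : R) * a ^ (k + 1)) *
              (PowerSeries.C (R := R) ((k : R) + 1) * rescale ((k : R) + 1) (exp R)))
          = (PowerSeries.C (R := R) a * PowerSeries.C (R := R) ((k.factorial : R) * a ^ (k + 1)) *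
              PowerSeries.C (R := R) ((k : R) + 1)) *
            (exp R * rescale ((k : R) + 1) (exp R)) := by ring_nf
        _ = ((k + 1).factorial : PowerSeries R) * PowerSeries.C (R := R) a ^ (k + 1 + 1) *
            rescale ((k : R) + 1 + 1) (exp R) := by
            rw [key, ← map_mul, ← map_mul]
            congr 1
            rw [show ((k + 1).factorial : PowerSeries R) = PowerSeries.C (R := R)
              (((k + 1).factorial : R)) by rw [map_natCast], ← map_pow, ← map_mul]
            congr 1
            rw [Nat.factorial_succ]
            push_cast
            ring
        _ = _ := by
            congr 2
            push_cast
            ring
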